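/- Let H : ℝ^n ⇒ ℝ^n be a closed convex process with negative and positive dual processes H^- and H^+, and let L_-(·) and L_+(·) denote the minimal and maximal linear processes associated with a convex process. Then L_-(H^-) = L_-(H^+) = (L_+(H))^⊥ and L_+(H^-) = L_+(H^+) = (L_-(H))^⊥, where for a linear process L, L^⊥ is the linear process with graph L^⊥ = {(b, −a) : (a,b) ∈ (graph L)^⊥}. -/

import Mathlib

open Matrix Set Pointwise

/-- A set-valued map from `ℝ^n` to subsets of `ℝ^n`. -/
abbrev SVMap (n : ℕ) := (Fin n → ℝ) → Set (Fin n → ℝ)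

/-- The graph of a set-valued map. -/
def graphOf {n : ℕ} (H : SVMap n) : Set ((Fin n → ℝ) × (Fin n → ℝ)) :=
  {p | p.2 ∈ H p.1}

/-- The set-valued map associated with a graph. -/
def ofGraph {n : ℕ} (G : Set ((Fin n → ℝ) × (Fin n → ℝ))) : SVMap n :=
  fun x => {y | (x, y) ∈ G}

/-- A convex cone: a nonempty convex set closed under nonnegative scalar multiplication. -/
def IsConvexCone {V : Type*} [AddCommGroup V] [Module ℝ V] (C : Set V) : Prop :=
  C.Nonempty ∧ Convex ℝ C ∧ ∀ c : ℝ, 0 ≤ c → ∀ x ∈ C, c • x ∈ C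

/-- A convex process: a set-valued map whose graph is a convex cone. -/
def IsConvexProcess {n : ℕ} (H : SVMap n) : Prop :=
  IsConvexCone (graphOf H)

/-- A linear process: a set-valued map whose graph is a linear subspace. -/
def IsLinearProcess {n : ℕ} (H : SVMap n) : Prop :=
  ∃ S : Submodule ℝ ((Fin n → ℝ) × (Fin n → ℝ)), graphOf H = (S : Set _)

/-- The domain of a set-valued map. -/
def domOf {n : ℕ} (H : SVMap n) : Set (Fin n → ℝ) := {x | (H x).Nonempty}

/-- The image of a set-valued map. -/
def imOf {n : ℕ} (H : SVMap n) : Set (Fin n → ℝ) := {y | ∃ x, y ∈ H x}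

/-- The reachable set: states reachable from the origin by a finite trajectory. -/
def reachSet {n : ℕ} (H : SVMap n) : Set (Fin n → ℝ) :=
  {ξ | ∃ (q : ℕ) (x : ℕ → (Fin n → ℝ)),
    x 0 = 0 ∧ x q = ξ ∧ ∀ k, k < q → x (k + 1) ∈ H (x k)}

/-- The null-controllable set: states steered to the origin by a finite trajectory. -/
def nullSet {n : ℕ} (H : SVMap n) : Set (Fin n → ℝ) :=
  {ξ | ∃ (q : ℕ) (x : ℕ → (Fin n → ℝ)),
    x 0 = ξ ∧ x q = 0 ∧ ∀ k, k < q → x (k + 1) ∈ H (x k)}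

/-- The feasible set: states from which an infinite trajectory emanates. -/
def feasSet {n : ℕ} (H : SVMap n) : Set (Fin n → ℝ) :=
  {ξ | ∃ x : ℕ → (Fin n → ℝ), x 0 = ξ ∧ ∀ k, x (k + 1) ∈ H (x k)}

/-- `H` is reachable if every feasible state is reachable. -/
def IsReachable {n : ℕ} (H : SVMap n) : Prop := feasSet H ⊆ reachSet H

/-- `H` is null-controllable if every feasible state is null-controllable. -/
def IsNullControllable {n : ℕ} (H : SVMap n) : Prop := feasSet H ⊆ nullSet H

/-- The minimal linear process `L_-` associated with `H`: graph `L_- = lin(graph H) = (-graph H) ∩ graph H`. -/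
def Lminus {n : ℕ} (H : SVMap n) : SVMap n := ofGraph ((-(graphOf H)) ∩ graphOf H)

/-- The maximal linear process `L_+` associated with `H`: graph `L_+ = Lin(graph H) = graph H - graph H`. -/
def Lplus {n : ℕ} (H : SVMap n) : SVMap n := ofGraph (graphOf H - graphOf H)

/-- The negative dual process: `p ∈ H^-(q)` iff `⟨p,x⟩ ≥ ⟨q,y⟩` for all `(x,y) ∈ graph H`. -/
def dualNeg {n : ℕ} (H : SVMap n) : SVMap n :=
  fun q => {p | ∀ x y, y ∈ H x → q ⬝ᵥ y ≤ p ⬝ᵥ x}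

/-- The positive dual process: `p ∈ H^+(q)` iff `⟨p,x⟩ ≤ ⟨q,y⟩` for all `(x,y) ∈ graph H`. -/
def dualPos {n : ℕ} (H : SVMap n) : SVMap n :=
  fun q => {p | ∀ x y, y ∈ H x → p ⬝ᵥ x ≤ q ⬝ᵥ y}

/-- `(lam, ξ)` is an eigenpair of `G` if `ξ ≠ 0` and `lam • ξ ∈ G(ξ)`. -/
def IsEigenpair {n : ℕ} (G : SVMap n) (lam : ℝ) (ξ : Fin n → ℝ) : Prop :=
  ξ ≠ 0 ∧ lam • ξ ∈ G ξ

/-- The conic hull: all conic (nonnegative) combinations of elements of `S`. -/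
def coneHull {V : Type*} [AddCommGroup V] [Module ℝ V] (S : Set V) : Set V :=
  {x | ∃ (k : ℕ) (c : Fin k → ℝ) (f : Fin k → V),
    (∀ i, 0 ≤ c i) ∧ (∀ i, f i ∈ S) ∧ x = ∑ i, c i • f i}

/-- The most powerful unfalsified process `H_D`: the convex process with graph `cone D`. -/
def mpup {n : ℕ} (D : Set ((Fin n → ℝ) × (Fin n → ℝ))) : SVMap n := ofGraph (coneHull D)

/-- The inner product on `ℝ^n × ℝ^n`. -/
def pairDot {n : ℕ} (p q : (Fin n → ℝ) × (Fin n → ℝ)) : ℝ := p.1 ⬝ᵥ q.1 + p.2 ⬝ᵥ q.2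

/-- The positive polar cone of a subset of `ℝ^n × ℝ^n`. -/
def polarPos {n : ℕ} (C : Set ((Fin n → ℝ) × (Fin n → ℝ))) :
    Set ((Fin n → ℝ) × (Fin n → ℝ)) :=
  {η | ∀ d ∈ C, 0 ≤ pairDot d η}

/-- The negative polar cone of a subset of `ℝ^n × ℝ^n`. -/
def polarNeg {n : ℕ} (C : Set ((Fin n → ℝ) × (Fin n → ℝ))) :
    Set ((Fin n → ℝ) × (Fin n → ℝ)) :=
  {η | ∀ d ∈ C, pairDot d η ≤ 0}

/-- The data set `D = {(x_t, y_t)}` whose elements are the column pairs of `X` and `Y`. -/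
def colPairs {n T : ℕ} (X Y : Matrix (Fin n) (Fin T) ℝ) :
    Set ((Fin n → ℝ) × (Fin n → ℝ)) :=
  {p | ∃ t : Fin T, p = (fun i => X i t, fun i => Y i t)}

/-- The rows of the matrix `[Z −W]`, viewed as pairs `(z_i, -w_i)` in `ℝ^n × ℝ^n`. -/
def rowPairsZW {m n : ℕ} (Z W : Matrix (Fin m) (Fin n) ℝ) :
    Set ((Fin n → ℝ) × (Fin n → ℝ)) :=
  {p | ∃ i : Fin m, p = (fun j => Z i j, fun j => -W i j)}

/-- `X ℝ_+^T`: the image of the nonnegative orthant under `X`. -/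
def posImage {n T : ℕ} (X : Matrix (Fin n) (Fin T) ℝ) : Set (Fin n → ℝ) :=
  {x | ∃ v : Fin T → ℝ, (∀ t, 0 ≤ v t) ∧ x = X *ᵥ v}

/-- The set-valued map `S ↦ W^{-1}(Z S)`. -/
def mapWiZ {m n : ℕ} (Z W : Matrix (Fin m) (Fin n) ℝ) :
    Set (Fin n → ℝ) → Set (Fin n → ℝ) :=
  fun S => {y | ∃ x ∈ S, W *ᵥ y = Z *ᵥ x}

/-- The set-valued map `S ↦ Z^{-1}(W S)`. -/
def mapZiW {m n : ℕ} (Z W : Matrix (Fin m) (Fin n) ℝ) :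
    Set (Fin n → ℝ) → Set (Fin n → ℝ) :=
  fun S => {y | ∃ x ∈ S, Z *ᵥ y = W *ᵥ x}

/-- The set-valued map `S ↦ Y(X^{-1} S)`. -/
def mapYXi {n T : ℕ} (X Y : Matrix (Fin n) (Fin T) ℝ) :
    Set (Fin n → ℝ) → Set (Fin n → ℝ) :=
  fun S => {y | ∃ v : Fin T → ℝ, X *ᵥ v ∈ S ∧ y = Y *ᵥ v}

/-- The set-valued map `S ↦ X(Y^{-1} S)`. -/
def mapXYi {n T : ℕ} (X Y : Matrix (Fin n) (Fin T) ℝ) :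
    Set (Fin n → ℝ) → Set (Fin n → ℝ) :=
  fun S => {y | ∃ v : Fin T → ℝ, Y *ᵥ v ∈ S ∧ y = X *ᵥ v}

/-- The image of a set under a set-valued map. -/
def imageSV {n : ℕ} (H : SVMap n) (S : Set (Fin n → ℝ)) : Set (Fin n → ℝ) :=
  {y | ∃ x ∈ S, y ∈ H x}

/-- The inverse of a set-valued map. -/
def invSV {n : ℕ} (H : SVMap n) : SVMap n := fun y => {x | y ∈ H x}

/-- The linear map `(a, b) ↦ (b, -a)` on `ℝ^n × ℝ^n`. -/
def flipMap {n : ℕ} : ((Fin n → ℝ) × (Fin n → ℝ)) → ((Fin n → ℝ) × (Fin n → ℝ)) :=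
  fun p => (p.2, -p.1)

/-- The orthogonal complement of a subset of `ℝ^n × ℝ^n`. -/
def orthPair {n : ℕ} (C : Set ((Fin n → ℝ) × (Fin n → ℝ))) :
    Set ((Fin n → ℝ) × (Fin n → ℝ)) :=
  {q | ∀ p ∈ C, pairDot p q = 0}

/-- The dual linear process `L^⊥`, with graph `{(b, -a) : (a, b) ∈ (graph L)^⊥}`. -/
def perpProcess {n : ℕ} (L : SVMap n) : SVMap n :=
  ofGraph (flipMap '' orthPair (graphOf L))

/-- The orthogonal complement of a subset of `ℝ^n`. -/
def orthVec {n : ℕ} (S : Set (Fin n → ℝ)) : Set (Fin n → ℝ) :=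
  {x | ∀ y ∈ S, x ⬝ᵥ y = 0}

section Aux

variable {n : ℕ}

local notation "E" => (Fin n → ℝ) × (Fin n → ℝ)

lemma pairDot_comm (p q : E) : pairDot p q = pairDot q p := by
  simp [pairDot, dotProduct_comm]

@[simp] lemma pairDot_neg_right (p q : E) : pairDot p (-q) = -pairDot p q := by
  simp [pairDot, Prod.fst_neg, Prod.snd_neg]; ring

@[simp] lemma pairDot_neg_left (p q : E) : pairDot (-p) q = -pairDot p q := by
  rw [pairDot_comm, pairDot_neg_right, pairDot_comm]

lemma pairDot_sub_left (p q r : E) : pairDot (p - q) r = pairDot p r - pairDot q r := by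
  simp [pairDot, Prod.fst_sub, Prod.snd_sub, sub_dotProduct]; ring

lemma pairDot_add_right (p q r : E) : pairDot p (q + r) = pairDot p q + pairDot p r := by
  simp [pairDot, Prod.fst_add, Prod.snd_add, dotProduct_add]; ring

lemma pairDot_smul_right (c : ℝ) (p q : E) : pairDot p (c • q) = c * pairDot p q := by
  simp [pairDot, Prod.smul_fst, Prod.smul_snd, dotProduct_smul, smul_eq_mul]; ring

lemma ofGraph_graphOf (S : Set E) : graphOf (ofGraph S) = S := by
  ext ⟨x, y⟩; simp [graphOf, ofGraph]

lemma zero_mem_of_cone {C : Set E} (h : IsConvexCone C) : (0 : E) ∈ C := by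
  obtain ⟨⟨x, hx⟩, -, hs⟩ := h
  simpa using hs 0 le_rfl x hx

lemma exists_pairDot_rep (f : E →L[ℝ] ℝ) : ∃ v : E, ∀ x, f x = pairDot v x := by
  refine ⟨((fun i => f ((fun j => if i = j then 1 else 0), 0)),
           (fun i => f (0, (fun j => if i = j then 1 else 0)))), ?_⟩
  rintro ⟨x, y⟩
  have hxy : ((x, y) : E) = (x, 0) + (0, y) := by simp
  have g1 : (Fin n → ℝ) →ₗ[ℝ] ℝ := 0
  have h1 : f (x, 0) = ∑ i, x i * f ((fun j => if i = j then 1 else 0), 0) := by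
    have := LinearMap.pi_apply_eq_sum_univ
      ((f : E →ₗ[ℝ] ℝ).comp (LinearMap.inl ℝ (Fin n → ℝ) (Fin n → ℝ))) x
    simpa [smul_eq_mul] using this
  have h2 : f (0, y) = ∑ i, y i * f (0, (fun j => if i = j then 1 else 0)) := by
    have := LinearMap.pi_apply_eq_sum_univ
      ((f : E →ₗ[ℝ] ℝ).comp (LinearMap.inr ℝ (Fin n → ℝ) (Fin n → ℝ))) y
    simpa [smul_eq_mul] using this
  rw [hxy, map_add, h1, h2]
  simp [pairDot, dotProduct, mul_comm]

lemma mem_polarPos {C : Set E} {η : E} : η ∈ polarPos C ↔ ∀ d ∈ C, 0 ≤ pairDot d η :=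
  Iff.rfl

lemma zero_mem_polarPos (C : Set E) : (0 : E) ∈ polarPos C := by
  intro d _; simp [pairDot]

lemma add_mem_polarPos {C : Set E} {a b : E} (ha : a ∈ polarPos C) (hb : b ∈ polarPos C) :
    a + b ∈ polarPos C := by
  intro d hd
  have := add_nonneg (ha d hd) (hb d hd)
  rwa [← pairDot_add_right] at this

lemma smul_mem_polarPos {C : Set E} {a : E} (ha : a ∈ polarPos C) {c : ℝ} (hc : 0 ≤ c) :
    c • a ∈ polarPos C := by
  intro d hd
  rw [pairDot_smul_right]
  exact mul_nonneg hc (ha d hd)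

lemma polarPos_polarPos {C : Set E} (hC : IsConvexCone C) (hcl : IsClosed C) :
    polarPos (polarPos C) = C := by
  apply Set.Subset.antisymm
  · intro x hx
    by_contra hxC
    obtain ⟨f, u, hfu, hux⟩ := geometric_hahn_banach_closed_point hC.2.1 hcl hxC
    obtain ⟨v, hv⟩ := exists_pairDot_rep f
    have h0u : (0 : ℝ) < u := by
      have := hfu 0 (zero_mem_of_cone hC)
      simpa using this
    have hle : ∀ y ∈ C, f y ≤ 0 := by
      intro y hy
      by_contra hpos
      push_neg at hpos
      have hc : (0 : ℝ) ≤ u / f y + 1 := by positivity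
      have hmem := hC.2.2 _ hc y hy
      have h1 := hfu _ hmem
      rw [_root_.map_smul, smul_eq_mul] at h1
      have h2 : (u / f y + 1) * f y = u + f y := by field_simp
      nlinarith
    have hvC : -v ∈ polarPos C := by
      intro d hd
      have := hle d hd
      rw [hv, pairDot_comm] at this
      rw [pairDot_neg_right]
      linarith
    have h2 : (0:ℝ) ≤ -pairDot v x := by simpa using hx _ hvC
    have h3 := hv x
    linarith
  · intro y hy d hd
    have := hd y hy
    rwa [pairDot_comm]

end Aux

section Aux2

variable {n : ℕ}

local notation "E" => (Fin n → ℝ) × (Fin n → ℝ)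

@[simp] lemma flipMap_flipMap (z : E) : flipMap (flipMap z) = -z := by
  simp [flipMap, Prod.ext_iff]

@[simp] lemma flipMap_neg (z : E) : flipMap (-z) = -flipMap z := by
  simp [flipMap, Prod.ext_iff]

lemma flipMap_sub (a b : E) : flipMap (a - b) = flipMap a - flipMap b := by
  simp [flipMap, Prod.ext_iff, neg_sub, sub_eq_add_neg]; abel

lemma neg_mem_orthPair {C : Set E} {w : E} (hw : w ∈ orthPair C) : -w ∈ orthPair C := by
  intro p hp
  rw [pairDot_neg_right, hw p hp, neg_zero]

/-- For a symmetric set `Q`, the image under `flipMap` equals the preimage. -/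
lemma image_flip_eq_preimage {Q : Set E} (hQ : ∀ w ∈ Q, -w ∈ Q) :
    flipMap '' Q = flipMap ⁻¹' Q := by
  ext z
  constructor
  · rintro ⟨w, hw, rfl⟩
    show flipMap (flipMap w) ∈ Q
    rw [flipMap_flipMap]
    exact hQ w hw
  · intro hz
    refine ⟨-flipMap z, hQ _ hz, ?_⟩
    rw [flipMap_neg, flipMap_flipMap, neg_neg]

lemma preimage_flip_neg (P : Set E) : -(flipMap ⁻¹' P) = flipMap ⁻¹' (-P) := by
  ext z
  simp only [Set.mem_neg, Set.mem_preimage, flipMap_neg]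

lemma preimage_flip_sub (P : Set E) :
    (flipMap ⁻¹' P) - (flipMap ⁻¹' P) = flipMap ⁻¹' (P - P) := by
  ext z
  constructor
  · rintro ⟨a, ha, b, hb, rfl⟩
    exact ⟨flipMap a, ha, flipMap b, hb, (flipMap_sub a b).symm⟩
  · rintro ⟨p, hp, q, hq, hpq⟩
    refine ⟨-flipMap p, ?_, -flipMap q, ?_, ?_⟩
    · show flipMap (-flipMap p) ∈ P
      rw [flipMap_neg, flipMap_flipMap, neg_neg]; exact hp
    · show flipMap (-flipMap q) ∈ P
      rw [flipMap_neg, flipMap_flipMap, neg_neg]; exact hq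
    · have hpq' : p - q = flipMap z := hpq
      show -flipMap p - -flipMap q = z
      have : flipMap (p - q) = flipMap (flipMap z) := by rw [hpq']
      rw [flipMap_sub, flipMap_flipMap] at this
      have := congrArg Neg.neg this
      rw [neg_neg] at this
      rw [← this]; abel

/-- The graph of the negative dual. -/
lemma graph_dualNeg (H : SVMap n) :
    graphOf (dualNeg H) = flipMap ⁻¹' polarPos (graphOf H) := by
  ext ⟨q, p⟩
  constructor
  · rintro h ⟨x, y⟩ hd
    have h1 := h x y hd
    have e1 : x ⬝ᵥ p = p ⬝ᵥ x := dotProduct_comm _ _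
    have e2 : y ⬝ᵥ q = q ⬝ᵥ y := dotProduct_comm _ _
    simp only [pairDot, flipMap, dotProduct_neg]
    linarith
  · intro h x y hy
    have h1 := h (x, y) hy
    simp only [pairDot, flipMap, dotProduct_neg] at h1
    have e1 : x ⬝ᵥ p = p ⬝ᵥ x := dotProduct_comm _ _
    have e2 : y ⬝ᵥ q = q ⬝ᵥ y := dotProduct_comm _ _
    linarith

lemma graph_dualPos (H : SVMap n) :
    graphOf (dualPos H) = -(graphOf (dualNeg H)) := by
  ext ⟨q, p⟩
  show (∀ x y, y ∈ H x → p ⬝ᵥ x ≤ q ⬝ᵥ y) ↔ (-q, -p).2 ∈ dualNeg H (-q, -p).1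
  constructor
  · intro h x y hy
    have := h x y hy
    simp only [neg_dotProduct]
    linarith
  · intro h x y hy
    have := h x y hy
    simp only [neg_dotProduct] at this
    linarith

/-- `P - P` is a submodule. -/
def polarSpan (C : Set E) : Submodule ℝ E where
  carrier := polarPos C - polarPos C
  zero_mem' := ⟨0, zero_mem_polarPos C, 0, zero_mem_polarPos C, by simp⟩
  add_mem' := by
    rintro x y ⟨a, ha, b, hb, rfl⟩ ⟨c, hc, d, hd, rfl⟩
    exact ⟨a + c, add_mem_polarPos ha hc, b + d, add_mem_polarPos hb hd, (sub_add_sub_comm a b c d).symm⟩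
  smul_mem' := by
    rintro c x ⟨a, ha, b, hb, rfl⟩
    rcases le_or_gt 0 c with hc | hc
    · exact ⟨c • a, smul_mem_polarPos ha hc, c • b, smul_mem_polarPos hb hc, by
        rw [smul_sub]⟩
    · refine ⟨(-c) • b, smul_mem_polarPos hb (by linarith), (-c) • a,
        smul_mem_polarPos ha (by linarith), ?_⟩
      rw [smul_sub]
      simp [neg_smul]
      abel

lemma isClosed_polarSpan (C : Set E) : IsClosed (polarPos C - polarPos C) :=
  (polarSpan C).closed_of_finiteDimensional

lemma isConvexCone_polarSpan (C : Set E) : IsConvexCone (polarPos C - polarPos C) := by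
  refine ⟨⟨0, (polarSpan C).zero_mem⟩, ?_, ?_⟩
  · exact (polarSpan C).convex
  · intro c hc x hx
    exact (polarSpan C).smul_mem c hx

/-- Key identity I2. -/
lemma polar_inter_neg (C : Set E) (h0 : (0 : E) ∈ C) :
    polarPos C ∩ (-(polarPos C)) = orthPair (C - C) := by
  ext η
  constructor
  · rintro ⟨h1, h2⟩
    rintro p ⟨a, ha, b, hb, rfl⟩
    rw [Set.mem_neg] at h2
    have ha1 := h1 a ha
    have hb1 := h1 b hb
    have ha2 := h2 a ha
    have hb2 := h2 b hb
    rw [pairDot_neg_right] at ha2 hb2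
    rw [pairDot_sub_left]
    linarith
  · intro h
    have key : ∀ d ∈ C, pairDot d η = 0 := by
      intro d hd
      have := h (d - 0) ⟨d, hd, 0, h0, rfl⟩
      simpa using this
    constructor
    · intro d hd; rw [key d hd]
    · rw [Set.mem_neg]
      intro d hd
      rw [pairDot_neg_right, key d hd, neg_zero]

/-- Key identity I4 (requires bipolar). -/
lemma polar_sub_eq (C : Set E) (hC : IsConvexCone C) (hcl : IsClosed C) :
    polarPos C - polarPos C = orthPair ((-C) ∩ C) := by
  have hbip : polarPos (polarPos C) = C := polarPos_polarPos hC hcl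
  have h0P : (0 : E) ∈ polarPos C := zero_mem_polarPos C
  -- polarPos (P - P) = (-C) ∩ C
  have hps : polarPos (polarPos C - polarPos C) = (-C) ∩ C := by
    ext η
    constructor
    · intro h
      have h1 : η ∈ polarPos (polarPos C) := by
        intro a ha
        have := h (a - 0) ⟨a, ha, 0, h0P, rfl⟩
        simpa using this
      have h2 : -η ∈ polarPos (polarPos C) := by
        intro a ha
        have := h (0 - a) ⟨0, h0P, a, ha, rfl⟩
        rw [pairDot_sub_left] at this
        rw [pairDot_neg_right]
        have h0 : pairDot (0 : E) η = 0 := by simp [pairDot]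
        linarith
      rw [hbip] at h1 h2
      exact ⟨Set.mem_neg.mpr h2, h1⟩
    · rintro ⟨hneg, hpos⟩
      rintro d ⟨a, ha, b, hb, rfl⟩
      rw [Set.mem_neg] at hneg
      have h1 := ha η hpos
      have h2 := ha (-η) hneg
      have h3 := hb η hpos
      have h4 := hb (-η) hneg
      rw [pairDot_comm] at h1 h2 h3 h4
      rw [pairDot_neg_right] at h2 h4
      show 0 ≤ pairDot (a - b) η
      rw [pairDot_sub_left]
      linarith
  have hS : polarPos (polarPos (polarPos C - polarPos C)) = polarPos C - polarPos C :=
    polarPos_polarPos (isConvexCone_polarSpan C) (isClosed_polarSpan C)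
  rw [← hS, hps]
  -- now: polarPos ((-C) ∩ C) = orthPair ((-C) ∩ C)
  ext η
  constructor
  · intro h p hp
    have h1 := h p hp
    have h2 := h (-p) ⟨by rw [Set.mem_neg, neg_neg]; exact hp.2, Set.mem_neg.mp hp.1⟩
    rw [pairDot_neg_left] at h2
    linarith
  · intro h p hp
    rw [h p hp]

end Aux2

/-- For a closed convex process `H`:
`L_-(H^-) = L_-(H^+) = (L_+(H))^⊥` and `L_+(H^-) = L_+(H^+) = (L_-(H))^⊥`. -/
theorem stmt18 {n : ℕ} (H : SVMap n) (hH : IsConvexProcess H)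
    (hcl : IsClosed (graphOf H)) :
    Lminus (dualNeg H) = Lminus (dualPos H) ∧
    Lminus (dualNeg H) = perpProcess (Lplus H) ∧
    Lplus (dualNeg H) = Lplus (dualPos H) ∧
    Lplus (dualNeg H) = perpProcess (Lminus H) := by
  have h0G : (0 : (Fin n → ℝ) × (Fin n → ℝ)) ∈ graphOf H := zero_mem_of_cone hH
  have gA : graphOf (dualNeg H) = flipMap ⁻¹' polarPos (graphOf H) := graph_dualNeg H
  have gB : graphOf (dualPos H) = -(graphOf (dualNeg H)) := graph_dualPos H
  have hI2 : polarPos (graphOf H) ∩ (-(polarPos (graphOf H)))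
      = orthPair (graphOf H - graphOf H) := polar_inter_neg (graphOf H) h0G
  have hI4 : polarPos (graphOf H) - polarPos (graphOf H)
      = orthPair ((-(graphOf H)) ∩ graphOf H) := polar_sub_eq (graphOf H) hH hcl
  have hsym2 : ∀ w ∈ polarPos (graphOf H) ∩ (-(polarPos (graphOf H))),
      -w ∈ polarPos (graphOf H) ∩ (-(polarPos (graphOf H))) := by
    rintro w ⟨h1, h2⟩
    exact ⟨Set.mem_neg.mp h2, by simpa using h1⟩
  have hsym4 : ∀ w ∈ polarPos (graphOf H) - polarPos (graphOf H),
      -w ∈ polarPos (graphOf H) - polarPos (graphOf H) := by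
    rintro w ⟨a, ha, b, hb, rfl⟩
    exact ⟨b, hb, a, ha, by show b - a = -(a - b); abel_nf⟩
  have e1 : (-(graphOf (dualPos H))) ∩ graphOf (dualPos H)
      = (-(graphOf (dualNeg H))) ∩ graphOf (dualNeg H) := by
    rw [gB, neg_neg, Set.inter_comm]
  have e2 : (-(graphOf (dualNeg H))) ∩ graphOf (dualNeg H)
      = flipMap '' orthPair (graphOf H - graphOf H) := by
    rw [← hI2, image_flip_eq_preimage hsym2, gA, Set.preimage_inter, ← preimage_flip_neg,
      Set.inter_comm]
  have e3 : graphOf (dualPos H) - graphOf (dualPos H)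
      = graphOf (dualNeg H) - graphOf (dualNeg H) := by
    rw [gB]
    apply Set.Subset.antisymm
    · rintro z ⟨a, ha, b, hb, rfl⟩
      exact ⟨-b, Set.mem_neg.mp hb, -a, Set.mem_neg.mp ha, by show -b - -a = a - b; abel⟩
    · rintro z ⟨a, ha, b, hb, rfl⟩
      exact ⟨-b, by simpa [Set.mem_neg] using hb, -a, by simpa [Set.mem_neg] using ha,
        by show -b - -a = a - b; abel⟩
  have e4 : graphOf (dualNeg H) - graphOf (dualNeg H)
      = flipMap '' orthPair ((-(graphOf H)) ∩ graphOf H) := by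
    rw [← hI4, image_flip_eq_preimage hsym4, ← preimage_flip_sub, ← gA]
  refine ⟨?_, ?_, ?_, ?_⟩
  · unfold Lminus
    exact congrArg ofGraph e1.symm
  · unfold Lminus perpProcess Lplus
    exact congrArg ofGraph (by rw [ofGraph_graphOf]; exact e2)
  · unfold Lplus
    exact congrArg ofGraph e3.symm
  · unfold Lplus perpProcess Lminus
    exact congrArg ofGraph (by rw [ofGraph_graphOf]; exact e4)
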